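/- arXiv:1708.05445 — 2 statements merged into one kernel-verified Lean document; each statement's English description precedes it below -/
import Mathlib

section
/- Let β > 1/2 and let r ∈ ℕ with r ≥ β. Let K ∈ L¹(ℝ) satisfy ∫ K(x) dx = 1, ∫ x^j K(x) dx = 0 for j = 1, …, r−1 (this condition being vacuous when r = 1), ∫ x^r K(x) dx ≠ 0, and ∫ |x|^r |K(x)| dx < +∞. Then K̂(0) = 1 and I²_β[K̂] := ∫_{t≠0} |1 − K̂(t)|²/|t|^{2β} dt < +∞. -/
open MeasureTheory Filter Real Topology

/-- Fourier transform `f̂(t) = ∫ e^{itx} f(x) dx`. -/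
noncomputable def ftr (f : ℝ → ℝ) (t : ℝ) : ℂ :=
  ∫ x : ℝ, Complex.exp (Complex.I * t * x) * (f x : ℂ)

lemma hasDerivAt_expI_sub_sum (n : ℕ) (y : ℝ) :
    HasDerivAt (fun s : ℝ => Complex.exp (Complex.I * s) -
        ∑ j ∈ Finset.range (n + 1), (Complex.I * s) ^ j / (j.factorial : ℂ))
      (Complex.I * (Complex.exp (Complex.I * y) -
        ∑ j ∈ Finset.range n, (Complex.I * y) ^ j / (j.factorial : ℂ))) y := by
  have hIs : HasDerivAt (fun z : ℂ => Complex.I * z) Complex.I (y : ℂ) := by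
    simpa using (hasDerivAt_id (y : ℂ)).const_mul Complex.I
  have hexp : HasDerivAt (fun s : ℝ => Complex.exp (Complex.I * s))
      (Complex.exp (Complex.I * y) * Complex.I) y := hIs.cexp.comp_ofReal
  have hsum : HasDerivAt (fun s : ℝ => ∑ j ∈ Finset.range (n + 1),
      (Complex.I * s) ^ j / (j.factorial : ℂ))
      (∑ j ∈ Finset.range (n + 1),
        ((j : ℂ) * (Complex.I * y) ^ (j - 1) * Complex.I) / (j.factorial : ℂ)) y := by
    apply HasDerivAt.fun_sum
    intro j _
    have h := (hIs.pow j).div_const (j.factorial : ℂ)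
    exact h.comp_ofReal
  have key : (∑ j ∈ Finset.range (n + 1),
      ((j : ℂ) * (Complex.I * y) ^ (j - 1) * Complex.I) / (j.factorial : ℂ))
      = Complex.I * ∑ j ∈ Finset.range n, (Complex.I * y) ^ j / (j.factorial : ℂ) := by
    rw [Finset.sum_range_succ']
    simp only [Nat.cast_zero, zero_mul, zero_div, add_zero]
    rw [Finset.mul_sum]
    apply Finset.sum_congr rfl
    intro j _
    have hfac : ((j + 1).factorial : ℂ) = (j + 1) * (j.factorial : ℂ) := by
      push_cast [Nat.factorial_succ]; ring
    rw [hfac, Nat.add_sub_cancel]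
    have h1 : ((j : ℂ) + 1) ≠ 0 := Nat.cast_add_one_ne_zero j
    have h2 : (j.factorial : ℂ) ≠ 0 := by exact_mod_cast j.factorial_ne_zero
    field_simp
    push_cast
    ring
  have h := hexp.fun_sub hsum
  rw [key] at h
  refine h.congr_deriv ?_
  ring

lemma expI_taylor_bound (n : ℕ) (y : ℝ) :
    ‖(Complex.exp (Complex.I * y) -
      ∑ j ∈ Finset.range n, (Complex.I * y) ^ j / (j.factorial : ℂ))‖ ≤ |y| ^ n := by
  induction n generalizing y with
  | zero => simp [Complex.norm_exp]
  | succ n ih =>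
    set f : ℝ → ℂ := fun s => Complex.exp (Complex.I * s) -
      ∑ j ∈ Finset.range (n + 1), (Complex.I * s) ^ j / (j.factorial : ℂ) with hf
    have hf0 : f 0 = 0 := by
      simp only [hf, Complex.ofReal_zero, mul_zero, Complex.exp_zero]
      rw [Finset.sum_eq_single 0 (fun j _ hj => by simp [zero_pow hj])
        (fun h => by simp at h)]
      simp
    have hC : ∀ x ∈ Set.uIcc (0 : ℝ) y,
        ‖Complex.I * (Complex.exp (Complex.I * x) -
          ∑ j ∈ Finset.range n, (Complex.I * x) ^ j / (j.factorial : ℂ))‖ ≤ |y| ^ n := by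
      intro x hx
      rw [norm_mul, Complex.norm_I, one_mul]
      refine le_trans (ih x) (pow_le_pow_left₀ (abs_nonneg x) ?_ n)
      rcases Set.mem_uIcc.1 hx with h | h
      · rw [abs_of_nonneg h.1, abs_of_nonneg (le_trans h.1 h.2)]; exact h.2
      · rw [abs_of_nonpos h.2, abs_of_nonpos (le_trans h.1 h.2)]; linarith [h.1]
    have hmvt := Convex.norm_image_sub_le_of_norm_hasDerivWithin_le
      (fun x _ => (hasDerivAt_expI_sub_sum n x).hasDerivWithinAt) hC
      (convex_uIcc (0:ℝ) y) Set.left_mem_uIcc Set.right_mem_uIcc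
    have hf00 : (Complex.exp (Complex.I * (0:ℝ)) -
        ∑ j ∈ Finset.range (n + 1), (Complex.I * (0:ℝ)) ^ j / (j.factorial : ℂ)) = 0 := hf0
    rw [hf00, sub_zero, Real.norm_eq_abs, sub_zero] at hmvt
    calc ‖f y‖ ≤ |y| ^ n * |y| := hmvt
    _ = |y| ^ (n + 1) := by ring

theorem kernel_of_order_r_satisfies_integrability
    (β : ℝ) (r : ℕ) (hβ : 1 / 2 < β) (hrβ : β ≤ (r : ℝ))
    (K : ℝ → ℝ) (hK_int : Integrable K)
    (hK_one : ∫ x, K x = 1)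
    (hK_mom : ∀ j : ℕ, 1 ≤ j → j < r → ∫ x, x ^ j * K x = 0)
    (hK_r : ∫ x, x ^ r * K x ≠ 0)
    (hK_abs : Integrable (fun x => |x| ^ r * |K x|)) :
    ftr K 0 = 1 ∧
    IntegrableOn
      (fun t : ℝ => (‖1 - ftr K t‖) ^ 2 / |t| ^ (2 * β)) {0}ᶜ := by
  have hr1 : 1 ≤ r := by
    rcases Nat.eq_zero_or_pos r with h | h
    · subst h; norm_num at hrβ; linarith
    · exact h
  -- basic facts
  have habs1 : ∀ (t x : ℝ), ‖Complex.exp (Complex.I * t * x)‖ = 1 := by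
    intro t x
    rw [Complex.norm_exp]
    simp [Complex.mul_re]
  have hmK : AEStronglyMeasurable (fun x : ℝ => (K x : ℂ)) volume :=
    Complex.continuous_ofReal.comp_aestronglyMeasurable hK_int.aestronglyMeasurable
  have heim : ∀ t : ℝ, Continuous (fun x : ℝ => Complex.exp (Complex.I * t * x)) :=
    fun t => Complex.continuous_exp.comp (continuous_const.mul Complex.continuous_ofReal)
  have hFint : ∀ t : ℝ, Integrable (fun x : ℝ => Complex.exp (Complex.I * t * x) * (K x : ℂ)) := by
    intro t
    refine hK_int.abs.mono' (((heim t).aestronglyMeasurable).mul hmK) ?_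
    filter_upwards with x
    rw [norm_mul, habs1, one_mul, Complex.norm_real, Real.norm_eq_abs]
  -- part 1
  have h0 : ftr K 0 = 1 := by
    unfold ftr
    simp only [Complex.ofReal_zero, mul_zero, zero_mul, Complex.exp_zero, one_mul]
    calc (∫ x : ℝ, ((K x : ℝ) : ℂ)) = ((∫ x, K x : ℝ) : ℂ) := integral_ofReal
      _ = 1 := by rw [hK_one]; norm_num
  refine ⟨h0, ?_⟩
  -- integrability of x^j K
  have hxj : ∀ j : ℕ, j ≤ r → Integrable (fun x : ℝ => x ^ j * K x) := by
    intro j hj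
    refine (hK_int.abs.add hK_abs).mono'
      (((continuous_pow j).aestronglyMeasurable).mul hK_int.aestronglyMeasurable) ?_
    filter_upwards with x
    simp only [Pi.add_apply]
    rw [Real.norm_eq_abs, abs_mul, abs_pow]
    rcases le_or_gt |x| 1 with h | h
    · have h1 : |x| ^ j ≤ 1 := pow_le_one₀ (abs_nonneg x) h
      have h2 : |x| ^ j * |K x| ≤ 1 * |K x| :=
        mul_le_mul_of_nonneg_right h1 (abs_nonneg _)
      have h3 : 0 ≤ |x| ^ r * |K x| :=
        mul_nonneg (pow_nonneg (abs_nonneg x) r) (abs_nonneg _)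
      linarith
    · have h1 : |x| ^ j ≤ |x| ^ r := pow_le_pow_right₀ h.le hj
      have h2 : |x| ^ j * |K x| ≤ |x| ^ r * |K x| :=
        mul_le_mul_of_nonneg_right h1 (abs_nonneg _)
      linarith [abs_nonneg (K x)]
  -- continuity of ftr K
  have hcont : Continuous (ftr K) := by
    refine continuous_of_dominated
      (fun t => ((heim t).aestronglyMeasurable).mul hmK) (fun t => ?_) hK_int.abs ?_
    · filter_upwards with x
      rw [norm_mul, habs1, one_mul, Complex.norm_real, Real.norm_eq_abs]
    · filter_upwards with x
      exact (Complex.continuous_exp.comp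
        ((continuous_const.mul Complex.continuous_ofReal).mul continuous_const)).mul
        continuous_const
  set M := ∫ x, |x| ^ r * |K x| with hM
  have hM0 : 0 ≤ M := integral_nonneg fun x =>
    mul_nonneg (pow_nonneg (abs_nonneg x) r) (abs_nonneg _)
  -- key local bound
  have hbound : ∀ t : ℝ, ‖1 - ftr K t‖ ≤ |t| ^ r * M := by
    intro t
    have hterm : ∀ x : ℝ, (∑ j ∈ Finset.range r,
        (Complex.I * t * x) ^ j / (j.factorial : ℂ)) * (K x : ℂ)
        = ∑ j ∈ Finset.range r, ((Complex.I * t) ^ j / (j.factorial : ℂ))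
            * ((x ^ j * K x : ℝ) : ℂ) := by
      intro x
      rw [Finset.sum_mul]
      refine Finset.sum_congr rfl fun j _ => ?_
      push_cast
      ring
    have htermInt : ∀ j ∈ Finset.range r, Integrable (fun x : ℝ =>
        ((Complex.I * t) ^ j / (j.factorial : ℂ)) * ((x ^ j * K x : ℝ) : ℂ)) := by
      intro j hj
      exact ((hxj j (le_of_lt (Finset.mem_range.1 hj))).ofReal.const_mul _)
    have hSKint : Integrable (fun x : ℝ => (∑ j ∈ Finset.range r,
        (Complex.I * t * x) ^ j / (j.factorial : ℂ)) * (K x : ℂ)) := by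
      refine (integrable_finset_sum _ htermInt).congr ?_
      filter_upwards with x
      rw [hterm x]
    have hSint : (∫ x : ℝ, (∑ j ∈ Finset.range r,
        (Complex.I * t * x) ^ j / (j.factorial : ℂ)) * (K x : ℂ)) = 1 := by
      rw [integral_congr_ae (Filter.Eventually.of_forall hterm),
        integral_finset_sum _ htermInt]
      have hval : ∀ j ∈ Finset.range r, (∫ x : ℝ,
          ((Complex.I * t) ^ j / (j.factorial : ℂ)) * ((x ^ j * K x : ℝ) : ℂ))
          = ((Complex.I * t) ^ j / (j.factorial : ℂ)) * ((∫ x : ℝ, x ^ j * K x : ℝ) : ℂ) := by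
        intro j _
        rw [integral_const_mul]
        congr 1
        exact integral_ofReal
      rw [Finset.sum_congr rfl hval]
      rw [Finset.sum_eq_single 0]
      · simp [hK_one]
      · intro j hj hj0
        rw [hK_mom j (Nat.one_le_iff_ne_zero.2 hj0) (Finset.mem_range.1 hj)]
        simp
      · intro h
        exact absurd (Finset.mem_range.2 (lt_of_lt_of_le Nat.zero_lt_one hr1)) h
    have h1sub : 1 - ftr K t = ∫ x : ℝ, ((∑ j ∈ Finset.range r,
        (Complex.I * t * x) ^ j / (j.factorial : ℂ)) - Complex.exp (Complex.I * t * x))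
          * (K x : ℂ) := by
      have : ∀ x : ℝ, ((∑ j ∈ Finset.range r,
          (Complex.I * t * x) ^ j / (j.factorial : ℂ)) - Complex.exp (Complex.I * t * x))
            * (K x : ℂ)
          = (∑ j ∈ Finset.range r, (Complex.I * t * x) ^ j / (j.factorial : ℂ)) * (K x : ℂ)
            - Complex.exp (Complex.I * t * x) * (K x : ℂ) := fun x => by ring
      rw [integral_congr_ae (Filter.Eventually.of_forall this),
        integral_sub hSKint (hFint t), hSint]
      rfl
    have hpt : ∀ x : ℝ, ‖((∑ j ∈ Finset.range r,
        (Complex.I * t * x) ^ j / (j.factorial : ℂ)) - Complex.exp (Complex.I * t * x))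
          * (K x : ℂ)‖ ≤ |t| ^ r * (|x| ^ r * |K x|) := by
      intro x
      rw [norm_mul, Complex.norm_real, Real.norm_eq_abs]
      have hcast : Complex.I * t * x = Complex.I * ((t * x : ℝ) : ℂ) := by push_cast; ring
      have := expI_taylor_bound r (t * x)
      rw [← hcast] at this
      have hsub : ‖(∑ j ∈ Finset.range r, (Complex.I * t * x) ^ j / (j.factorial : ℂ))
          - Complex.exp (Complex.I * t * x)‖ ≤ |t * x| ^ r := by
        rw [norm_sub_rev]
        exact this
      calc ‖(∑ j ∈ Finset.range r, (Complex.I * t * x) ^ j / (j.factorial : ℂ))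
          - Complex.exp (Complex.I * t * x)‖ * |K x|
          ≤ |t * x| ^ r * |K x| := by
            exact mul_le_mul_of_nonneg_right hsub (abs_nonneg _)
        _ = |t| ^ r * (|x| ^ r * |K x|) := by rw [abs_mul, mul_pow]; ring
    calc ‖1 - ftr K t‖
        = ‖∫ x : ℝ, ((∑ j ∈ Finset.range r,
            (Complex.I * t * x) ^ j / (j.factorial : ℂ)) - Complex.exp (Complex.I * t * x))
              * (K x : ℂ)‖ := by rw [← h1sub]
      _ ≤ ∫ x : ℝ, ‖((∑ j ∈ Finset.range r,
            (Complex.I * t * x) ^ j / (j.factorial : ℂ)) - Complex.exp (Complex.I * t * x))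
              * (K x : ℂ)‖ := norm_integral_le_integral_norm _
      _ ≤ ∫ x : ℝ, |t| ^ r * (|x| ^ r * |K x|) := by
            refine integral_mono_of_nonneg (Filter.Eventually.of_forall fun x => norm_nonneg _)
              (hK_abs.const_mul _) (Filter.Eventually.of_forall hpt)
      _ = |t| ^ r * M := by rw [MeasureTheory.integral_const_mul]
  -- global bound
  set C : ℝ := 1 + ∫ x, |K x| with hC
  have hC0 : 0 ≤ C := by
    have : 0 ≤ ∫ x, |K x| := integral_nonneg fun x => abs_nonneg _
    linarith
  have hgb : ∀ t : ℝ, ‖1 - ftr K t‖ ≤ C := by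
    intro t
    have h1 : ‖ftr K t‖ ≤ ∫ x, |K x| := by
      calc ‖ftr K t‖
          = ‖∫ x : ℝ, Complex.exp (Complex.I * t * x) * (K x : ℂ)‖ := rfl
        _ ≤ ∫ x : ℝ, ‖Complex.exp (Complex.I * t * x) * (K x : ℂ)‖ :=
            norm_integral_le_integral_norm _
        _ = ∫ x, |K x| := by
            refine integral_congr_ae (Filter.Eventually.of_forall fun x => ?_)
            show ‖Complex.exp (Complex.I * t * x) * (K x : ℂ)‖ = |K x|
            rw [norm_mul, habs1, one_mul, Complex.norm_real,
              Real.norm_eq_abs]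
    calc ‖1 - ftr K t‖ ≤ ‖(1 : ℂ)‖ + ‖ftr K t‖ := by
          simpa using norm_sub_le (1 : ℂ) (ftr K t)
      _ ≤ 1 + ∫ x, |K x| := by simp only [norm_one]; linarith
  -- continuity of the integrand away from 0
  set G : ℝ → ℝ := fun t => (‖1 - ftr K t‖) ^ 2 / |t| ^ (2 * β) with hG
  have hGnn : ∀ t, 0 ≤ G t := fun t =>
    div_nonneg (sq_nonneg _) (Real.rpow_nonneg (abs_nonneg t) _)
  have hcont2 : ContinuousOn G {0}ᶜ := by
    apply ContinuousOn.div
    · exact ((continuous_norm.comp (continuous_const.sub hcont)).pow 2).continuousOn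
    · exact continuous_abs.continuousOn.rpow_const fun x hx => Or.inl (abs_ne_zero.2 hx)
    · intro x hx
      exact ne_of_gt (Real.rpow_pos_of_pos (abs_pos.2 hx) _)
  have hmeasG : ∀ s : Set ℝ, MeasurableSet s → s ⊆ {0}ᶜ →
      AEStronglyMeasurable G (volume.restrict s) := by
    intro s hs hsub
    exact ((hcont2.mono hsub).aestronglyMeasurable hs)
  -- middle part
  have hmid : IntegrableOn G (Set.Ioo (-1 : ℝ) 0 ∪ Set.Ioo (0 : ℝ) 1) := by
    have hs : MeasurableSet (Set.Ioo (-1 : ℝ) 0 ∪ Set.Ioo (0 : ℝ) 1) :=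
      measurableSet_Ioo.union measurableSet_Ioo
    have hsub : Set.Ioo (-1 : ℝ) 0 ∪ Set.Ioo (0 : ℝ) 1 ⊆ {0}ᶜ := by
      intro t ht
      rcases ht with h | h
      · exact ne_of_lt h.2
      · exact ne_of_gt h.1
    refine Integrable.mono' (g := fun _ => M ^ 2)
      ((integrableOn_const_iff (C := M ^ 2) enorm_ne_top).2 (Or.inr ?_)) (hmeasG _ hs hsub) ?_
    · calc volume (Set.Ioo (-1 : ℝ) 0 ∪ Set.Ioo (0 : ℝ) 1)
          ≤ volume (Set.Ioo (-1 : ℝ) 0) + volume (Set.Ioo (0 : ℝ) 1) := measure_union_le _ _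
        _ < ⊤ := by simp [Real.volume_Ioo]
    · rw [ae_restrict_iff' hs]
      filter_upwards with t ht
      have ht0 : 0 < |t| := abs_pos.2 (hsub ht)
      have ht1 : |t| ≤ 1 := by
        rcases ht with h | h
        · rw [abs_of_neg h.2]; linarith [h.1]
        · rw [abs_of_pos h.1]; exact h.2.le
      rw [Real.norm_eq_abs, abs_of_nonneg (hGnn t)]
      have hnum : (‖1 - ftr K t‖) ^ 2 ≤ M ^ 2 * |t| ^ ((2 * r : ℕ) : ℝ) := by
        have := hbound t
        have h2 : (‖1 - ftr K t‖) ^ 2 ≤ (|t| ^ r * M) ^ 2 := by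
          exact pow_le_pow_left₀ (norm_nonneg _) this 2
        calc (‖1 - ftr K t‖) ^ 2 ≤ (|t| ^ r * M) ^ 2 := h2
          _ = M ^ 2 * |t| ^ (2 * r : ℕ) := by rw [mul_pow, ← pow_mul]; ring
          _ = M ^ 2 * |t| ^ ((2 * r : ℕ) : ℝ) := by rw [Real.rpow_natCast]
      have hden : |t| ^ ((2 * r : ℕ) : ℝ) ≤ |t| ^ (2 * β) := by
        apply Real.rpow_le_rpow_of_exponent_ge ht0 ht1
        push_cast
        linarith
      have hdpos : 0 < |t| ^ (2 * β) := Real.rpow_pos_of_pos ht0 _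
      rw [hG]
      calc (‖1 - ftr K t‖) ^ 2 / |t| ^ (2 * β)
          ≤ (M ^ 2 * |t| ^ ((2 * r : ℕ) : ℝ)) / |t| ^ (2 * β) := by gcongr
        _ ≤ (M ^ 2 * |t| ^ (2 * β)) / |t| ^ (2 * β) := by gcongr
        _ = M ^ 2 := by field_simp
  -- right tail
  have hrpow_int : IntegrableOn (fun t : ℝ => C ^ 2 * |t| ^ (-(2 * β))) (Set.Ici (1 : ℝ)) := by
    have h1 : IntegrableOn (fun t : ℝ => t ^ (-(2 * β))) (Set.Ioi (1 : ℝ)) :=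
      integrableOn_Ioi_rpow_of_lt (by linarith) one_pos
    have h2 : IntegrableOn (fun t : ℝ => C ^ 2 * |t| ^ (-(2 * β))) (Set.Ioi (1 : ℝ)) :=
      MeasureTheory.IntegrableOn.congr_fun (h1.const_mul (C ^ 2))
        (fun t ht => by rw [abs_of_pos (lt_trans one_pos ht)]) measurableSet_Ioi
    rwa [integrableOn_Ici_iff_integrableOn_Ioi]
  have htail_bound : ∀ t : ℝ, 1 ≤ |t| → G t ≤ C ^ 2 * |t| ^ (-(2 * β)) := by
    intro t ht
    have ht0 : 0 < |t| := lt_of_lt_of_le one_pos ht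
    have hdpos : 0 < |t| ^ (2 * β) := Real.rpow_pos_of_pos ht0 _
    rw [hG, Real.rpow_neg (abs_nonneg t)]
    rw [div_le_iff₀ hdpos] at *
    calc (‖1 - ftr K t‖) ^ 2 ≤ C ^ 2 :=
        pow_le_pow_left₀ (norm_nonneg _) (hgb t) 2
      _ = C ^ 2 * (|t| ^ (2 * β))⁻¹ * |t| ^ (2 * β) := by field_simp
  have hright : IntegrableOn G (Set.Ici (1 : ℝ)) := by
    refine Integrable.mono' hrpow_int
      (hmeasG _ measurableSet_Ici (fun t ht => ne_of_gt (lt_of_lt_of_le one_pos ht))) ?_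
    rw [ae_restrict_iff' measurableSet_Ici]
    filter_upwards with t ht
    rw [Real.norm_eq_abs, abs_of_nonneg (hGnn t)]
    exact htail_bound t (by rw [abs_of_pos (lt_of_lt_of_le one_pos ht)]; exact ht)
  -- left tail
  have hlpow_int : IntegrableOn (fun t : ℝ => C ^ 2 * |t| ^ (-(2 * β))) (Set.Iic (-1 : ℝ)) := by
    have h := ((Measure.measurePreserving_neg (volume : Measure ℝ)).integrableOn_comp_preimage
      (Homeomorph.neg ℝ).measurableEmbedding).2 hrpow_int
    have hpre : (Neg.neg ⁻¹' Set.Ici (1 : ℝ) : Set ℝ) = Set.Iic (-1 : ℝ) := by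
      ext t
      simp only [Set.mem_preimage, Set.mem_Ici, Set.mem_Iic]
      constructor <;> intro h <;> linarith
    rw [hpre] at h
    refine MeasureTheory.IntegrableOn.congr_fun h (fun t _ => ?_) measurableSet_Iic
    show C ^ 2 * |(-t)| ^ (-(2*β)) = C ^ 2 * |t| ^ (-(2*β))
    rw [abs_neg]
  have hleft : IntegrableOn G (Set.Iic (-1 : ℝ)) := by
    refine Integrable.mono' hlpow_int
      (hmeasG _ measurableSet_Iic (fun t ht => by
        simp only [Set.mem_Iic] at ht
        simp only [Set.mem_compl_iff, Set.mem_singleton_iff]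
        intro h; rw [h] at ht; linarith)) ?_
    rw [ae_restrict_iff' measurableSet_Iic]
    filter_upwards with t ht
    simp only [Set.mem_Iic] at ht
    rw [Real.norm_eq_abs, abs_of_nonneg (hGnn t)]
    refine htail_bound t ?_
    rw [abs_of_neg (by linarith : t < 0)]
    linarith
  -- combine
  refine ((hleft.union hmid).union hright).mono_set ?_
  intro t ht
  simp only [Set.mem_compl_iff, Set.mem_singleton_iff] at ht
  simp only [Set.mem_union, Set.mem_Iic, Set.mem_Ioo, Set.mem_Ici]
  rcases le_or_gt t (-1) with h | h
  · exact Or.inl (Or.inl h)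
  · rcases lt_trichotomy t 0 with h2 | h2 | h2
    · exact Or.inl (Or.inr (Or.inl ⟨h, h2⟩))
    · exact absurd h2 ht
    · rcases lt_or_ge t 1 with h3 | h3
      · exact Or.inl (Or.inr (Or.inr ⟨h2, h3⟩))
      · exact Or.inr h3
end

section
/- Let G and G′ be probability measures on a Borel subset 𝒴 ⊆ ℝ whose moment generating functions M_G(s) and M_{G′}(s) are finite for all |s| < s₀, with 0 < s₀ < 1. Fix a real number p ≥ 1 and 0 < u < s₀. Then there exists a constant C < +∞, depending only on p, u, s₀ and on the values of the moment generating functions of G and G′ on (−s₀,s₀), such that for every M > 0 and every 0 < h ≤ 1, ∫_{|x|>M} |x|^p [((G+G′)∗φ_h)(x)] dx ≤ C e^{−uM}, where ((G+G′)∗φ_h)(x) := ∫ φ_h(x−y) dG(y) + ∫ φ_h(x−y) dG′(y). -/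
open MeasureTheory Filter Real Topology

/-- Density of the centered Gaussian measure with variance `h²`. -/
noncomputable def gaussDens (h x : ℝ) : ℝ :=
  (h * Real.sqrt (2 * π))⁻¹ * Real.exp (-x ^ 2 / (2 * h ^ 2))

lemma gaussDens_nonneg {h : ℝ} (hh : 0 < h) (x : ℝ) : 0 ≤ gaussDens h x := by
  unfold gaussDens
  positivity

lemma gaussDens_cont (h : ℝ) : Continuous (gaussDens h) := by
  unfold gaussDens
  fun_prop

lemma gaussDens_le {h : ℝ} (hh : 0 < h) (x : ℝ) :
    gaussDens h x ≤ (h * Real.sqrt (2 * π))⁻¹ := by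
  unfold gaussDens
  have h1 : Real.exp (-x ^ 2 / (2 * h ^ 2)) ≤ 1 := by
    rw [Real.exp_le_one_iff]
    have : (0:ℝ) < 2 * h ^ 2 := by positivity
    apply div_nonpos_of_nonpos_of_nonneg <;> nlinarith [sq_nonneg x]
  have h2 : (0:ℝ) ≤ (h * Real.sqrt (2 * π))⁻¹ := by positivity
  nlinarith

lemma gaussDens_eq_pdf {h : ℝ} (hh : 0 < h) (x : ℝ) :
    gaussDens h x = ProbabilityTheory.gaussianPDFReal 0 ⟨h^2, sq_nonneg h⟩ x := by
  unfold gaussDens ProbabilityTheory.gaussianPDFReal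
  simp only [NNReal.coe_mk, sub_zero]
  change (h * √(2 * π))⁻¹ * rexp (-x ^ 2 / (2 * h ^ 2)) = (√(2 * π * h^2))⁻¹ * rexp (-x ^ 2 / (2 * h^2))
  rw [show (2 * π * h^2 : ℝ) = h^2 * (2 * π) by ring, Real.sqrt_mul (sq_nonneg h),
    Real.sqrt_sq hh.le]

lemma integrable_gaussDens {h : ℝ} (hh : 0 < h) : Integrable (gaussDens h) := by
  simp_rw [funext fun x => gaussDens_eq_pdf hh x]
  exact ProbabilityTheory.integrable_gaussianPDFReal _ _

lemma integral_gaussDens {h : ℝ} (hh : 0 < h) : ∫ x, gaussDens h x = 1 := by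
  simp_rw [funext fun x => gaussDens_eq_pdf hh x]
  refine ProbabilityTheory.integral_gaussianPDFReal_eq_one 0 ?_
  intro hc
  have : (h:ℝ)^2 = 0 := by
    have := congrArg (NNReal.toReal) hc
    simp at this; exact this
  nlinarith

lemma exp_mul_gaussDens {h : ℝ} (hh : 0 < h) (s t : ℝ) :
    Real.exp (s * t) * gaussDens h t
      = Real.exp (s^2 * h^2 / 2) * gaussDens h (t - s * h^2) := by
  unfold gaussDens
  rw [show Real.exp (s*t) * ((h * Real.sqrt (2 * π))⁻¹ * Real.exp (-t ^ 2 / (2 * h ^ 2)))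
      = (h * Real.sqrt (2 * π))⁻¹ * (Real.exp (s*t) * Real.exp (-t ^ 2 / (2 * h ^ 2))) by ring,
    show Real.exp (s^2*h^2/2) * ((h * Real.sqrt (2 * π))⁻¹ *
        Real.exp (-(t - s*h^2) ^ 2 / (2 * h ^ 2)))
      = (h * Real.sqrt (2 * π))⁻¹ * (Real.exp (s^2*h^2/2) *
        Real.exp (-(t - s*h^2) ^ 2 / (2 * h ^ 2))) by ring,
    ← Real.exp_add, ← Real.exp_add]
  congr 1
  have hh2 : (h:ℝ)^2 ≠ 0 := by positivity
  field_simp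
  ring

lemma integral_exp_mul_gaussDens {h : ℝ} (hh : 0 < h) (s : ℝ) :
    ∫ t, Real.exp (s * t) * gaussDens h t = Real.exp (s^2 * h^2 / 2) := by
  simp_rw [funext fun t => exp_mul_gaussDens hh s t]
  rw [integral_const_mul]
  have : ∫ t, gaussDens h (t - s * h^2) = ∫ t, gaussDens h t :=
    integral_sub_right_eq_self (gaussDens h) (s * h^2)
  rw [this, integral_gaussDens hh, mul_one]

lemma integrable_exp_mul_gaussDens {h : ℝ} (hh : 0 < h) (s : ℝ) :
    Integrable (fun t => Real.exp (s * t) * gaussDens h t) := by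
  simp_rw [funext fun t => exp_mul_gaussDens hh s t]
  exact ((integrable_gaussDens hh).comp_sub_right (s*h^2)).const_mul _

lemma rpow_le_const_mul_exp {p ε t : ℝ} (hp : 1 ≤ p) (hε : 0 < ε) (ht : 0 ≤ t) :
    t ^ p ≤ (1 + ((⌈p⌉₊ : ℝ) / ε) ^ ⌈p⌉₊) * Real.exp (ε * t) := by
  set n := ⌈p⌉₊ with hn
  have hn1 : 1 ≤ n := by
    rw [hn]
    exact Nat.one_le_ceil_iff.mpr (by linarith)
  have hnR : (0:ℝ) < n := by exact_mod_cast hn1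
  have hKnn : (0:ℝ) ≤ ((n : ℝ) / ε) ^ n := by positivity
  have hexp1 : (1:ℝ) ≤ Real.exp (ε * t) := Real.one_le_exp (by positivity)
  rcases le_or_gt t 1 with ht1 | ht1
  · have h1 : t ^ p ≤ 1 := Real.rpow_le_one ht ht1 (by linarith)
    nlinarith
  · have h1 : t ^ p ≤ t ^ (n : ℝ) :=
      Real.rpow_le_rpow_of_exponent_le ht1.le (Nat.le_ceil p)
    rw [Real.rpow_natCast] at h1
    have h2 : t ^ n ≤ ((n : ℝ) / ε) ^ n * Real.exp (ε * t) := by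
      have ht' : t = ((n : ℝ) / ε) * (ε * t / n) := by field_simp
      have h3 : (ε * t / n) ^ n ≤ Real.exp (ε * t / n) ^ n := by
        apply pow_le_pow_left₀ (by positivity)
        have := Real.add_one_le_exp (ε * t / n)
        linarith
      have h4 : Real.exp (ε * t / n) ^ n = Real.exp (ε * t) := by
        rw [← Real.exp_nat_mul]
        congr 1
        field_simp
      calc t ^ n = ((n : ℝ) / ε) ^ n * (ε * t / n) ^ n := by
              rw [← mul_pow, ← ht']
        _ ≤ ((n : ℝ) / ε) ^ n * Real.exp (ε * t) := by
              rw [← h4]; exact mul_le_mul_of_nonneg_left h3 (by positivity)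
    nlinarith [Real.exp_nonneg (ε * t)]

lemma lintegral_exp_abs_gaussDens {h s : ℝ} (hh : 0 < h) (hh1 : h ≤ 1)
    (hs : 0 ≤ s) (hs1 : s ≤ 1) :
    ∫⁻ t, ENNReal.ofReal (Real.exp (s * |t|) * gaussDens h t)
      ≤ ENNReal.ofReal (2 * Real.exp 1) := by
  have hint : Integrable (fun t => (Real.exp (s*t) + Real.exp (-(s*t))) * gaussDens h t) := by
    simp_rw [add_mul]
    refine (integrable_exp_mul_gaussDens hh s).add ?_
    simpa [neg_mul] using integrable_exp_mul_gaussDens hh (-s)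
  have hmono : ∀ t, Real.exp (s*|t|) * gaussDens h t
      ≤ (Real.exp (s*t) + Real.exp (-(s*t))) * gaussDens h t := by
    intro t
    apply mul_le_mul_of_nonneg_right _ (gaussDens_nonneg hh t)
    rcases abs_cases t with ⟨he, _⟩ | ⟨he, _⟩
    · rw [he]; nlinarith [Real.exp_nonneg (-(s*t))]
    · rw [he, mul_neg]; nlinarith [Real.exp_nonneg (s*t)]
  calc ∫⁻ t, ENNReal.ofReal (Real.exp (s * |t|) * gaussDens h t)
      ≤ ∫⁻ t, ENNReal.ofReal ((Real.exp (s*t) + Real.exp (-(s*t))) * gaussDens h t) :=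
        lintegral_mono fun t => ENNReal.ofReal_le_ofReal (hmono t)
    _ = ENNReal.ofReal (∫ t, (Real.exp (s*t) + Real.exp (-(s*t))) * gaussDens h t) := by
        rw [← ofReal_integral_eq_lintegral_ofReal hint]
        exact ae_of_all _ fun t => mul_nonneg (by positivity) (gaussDens_nonneg hh t)
    _ ≤ ENNReal.ofReal (2 * Real.exp 1) := by
        apply ENNReal.ofReal_le_ofReal
        have : ∫ t, (Real.exp (s*t) + Real.exp (-(s*t))) * gaussDens h t
            = Real.exp (s^2 * h^2 / 2) + Real.exp ((-s)^2 * h^2 / 2) := by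
          simp_rw [add_mul]
          rw [integral_add (integrable_exp_mul_gaussDens hh s)
            (by simpa [neg_mul] using integrable_exp_mul_gaussDens hh (-s)),
            integral_exp_mul_gaussDens hh s]
          congr 1
          rw [← integral_exp_mul_gaussDens hh (-s)]
          simp [neg_mul]
        rw [this]
        have hs2 : s^2 ≤ 1 := by nlinarith
        have hh2 : h^2 ≤ 1 := by nlinarith
        have hsh : s^2 * h^2 ≤ 1 := by nlinarith [sq_nonneg s, sq_nonneg h]
        have h1 : Real.exp (s^2 * h^2 / 2) ≤ Real.exp 1 :=
          Real.exp_le_exp.mpr (by nlinarith)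
        have h2 : Real.exp ((-s)^2 * h^2 / 2) ≤ Real.exp 1 :=
          Real.exp_le_exp.mpr (by nlinarith)
        linarith

lemma single_measure_bound (G : Measure ℝ) [IsProbabilityMeasure G] {s h : ℝ}
    (hs : 0 ≤ s) (hs1 : s ≤ 1) (hh : 0 < h) (hh1 : h ≤ 1)
    (hint : Integrable (fun y => Real.exp (s * y) + Real.exp (-(s * y))) G) :
    ∫⁻ x, ENNReal.ofReal (Real.exp (s * |x|))
        * ∫⁻ y, ENNReal.ofReal (gaussDens h (x - y)) ∂G
      ≤ ENNReal.ofReal (2 * Real.exp 1)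
        * ENNReal.ofReal (∫ y, (Real.exp (s * y) + Real.exp (-(s * y))) ∂G) := by
  have hmeas : Measurable (Function.uncurry fun x y : ℝ =>
      ENNReal.ofReal (Real.exp (s * |x|)) * ENNReal.ofReal (gaussDens h (x - y))) := by
    apply Measurable.mul (f := fun z : ℝ × ℝ => ENNReal.ofReal (Real.exp (s * |z.1|)))
      (g := fun z : ℝ × ℝ => ENNReal.ofReal (gaussDens h (z.1 - z.2)))
    · apply Measurable.ennreal_ofReal
      fun_prop
    · apply Measurable.ennreal_ofReal
      exact ((gaussDens_cont h).comp (continuous_fst.sub continuous_snd)).measurable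
  calc ∫⁻ x, ENNReal.ofReal (Real.exp (s * |x|))
          * ∫⁻ y, ENNReal.ofReal (gaussDens h (x - y)) ∂G
      = ∫⁻ x, ∫⁻ y, ENNReal.ofReal (Real.exp (s * |x|))
          * ENNReal.ofReal (gaussDens h (x - y)) ∂G := by
        congr 1; ext x
        rw [lintegral_const_mul' _ _ ENNReal.ofReal_ne_top]
    _ = ∫⁻ y, ∫⁻ x, ENNReal.ofReal (Real.exp (s * |x|))
          * ENNReal.ofReal (gaussDens h (x - y)) ∂volume ∂G :=
        lintegral_lintegral_swap hmeas.aemeasurable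
    _ ≤ ∫⁻ y, ENNReal.ofReal (Real.exp (s * |y|)) * ENNReal.ofReal (2 * Real.exp 1) ∂G := by
        apply lintegral_mono
        intro y
        have step1 : ∀ x : ℝ, ENNReal.ofReal (Real.exp (s * |x|))
            * ENNReal.ofReal (gaussDens h (x - y))
            ≤ ENNReal.ofReal (Real.exp (s * |y|))
              * ENNReal.ofReal (Real.exp (s * |x - y|) * gaussDens h (x - y)) := by
          intro x
          rw [← ENNReal.ofReal_mul (Real.exp_nonneg _), ← ENNReal.ofReal_mul (Real.exp_nonneg _)]
          apply ENNReal.ofReal_le_ofReal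
          rw [← mul_assoc, ← Real.exp_add]
          apply mul_le_mul_of_nonneg_right _ (gaussDens_nonneg hh _)
          apply Real.exp_le_exp.mpr
          have habs : |x| ≤ |y| + |x - y| := by
            have := abs_sub_abs_le_abs_sub x y
            linarith [abs_nonneg (x - y)]
          nlinarith
        calc ∫⁻ x, ENNReal.ofReal (Real.exp (s * |x|))
                * ENNReal.ofReal (gaussDens h (x - y))
            ≤ ∫⁻ x, ENNReal.ofReal (Real.exp (s * |y|))
                * ENNReal.ofReal (Real.exp (s * |x - y|) * gaussDens h (x - y)) :=
              lintegral_mono step1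
          _ = ENNReal.ofReal (Real.exp (s * |y|))
              * ∫⁻ x, ENNReal.ofReal (Real.exp (s * |x - y|) * gaussDens h (x - y)) :=
              lintegral_const_mul' _ _ ENNReal.ofReal_ne_top
          _ = ENNReal.ofReal (Real.exp (s * |y|))
              * ∫⁻ t, ENNReal.ofReal (Real.exp (s * |t|) * gaussDens h t) := by
              congr 1
              exact lintegral_sub_right_eq_self
                (fun t => ENNReal.ofReal (Real.exp (s * |t|) * gaussDens h t)) y
          _ ≤ ENNReal.ofReal (Real.exp (s * |y|)) * ENNReal.ofReal (2 * Real.exp 1) :=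
              mul_le_mul_right (lintegral_exp_abs_gaussDens hh hh1 hs hs1) _
    _ = ENNReal.ofReal (2 * Real.exp 1) * ∫⁻ y, ENNReal.ofReal (Real.exp (s * |y|)) ∂G := by
        rw [lintegral_mul_const' _ _ ENNReal.ofReal_ne_top, mul_comm]
    _ ≤ ENNReal.ofReal (2 * Real.exp 1)
        * ENNReal.ofReal (∫ y, (Real.exp (s * y) + Real.exp (-(s * y))) ∂G) := by
        apply mul_le_mul_right
        rw [ofReal_integral_eq_lintegral_ofReal hint
          (ae_of_all _ fun y => by positivity)]
        apply lintegral_mono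
        intro y
        apply ENNReal.ofReal_le_ofReal
        rcases abs_cases y with ⟨he, _⟩ | ⟨he, _⟩
        · rw [he]; nlinarith [Real.exp_nonneg (-(s * y))]
        · rw [he, mul_neg]; nlinarith [Real.exp_nonneg (s * y)]

theorem tail_integral_bound_smoothed_mixing
    (G G' : Measure ℝ) [IsProbabilityMeasure G] [IsProbabilityMeasure G']
    (s₀ : ℝ) (hs₀ : 0 < s₀) (hs₀1 : s₀ < 1)
    (hmgfG : ∀ s : ℝ, |s| < s₀ → Integrable (fun y => Real.exp (s * y)) G)
    (hmgfG' : ∀ s : ℝ, |s| < s₀ → Integrable (fun y => Real.exp (s * y)) G')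
    (p : ℝ) (hp : 1 ≤ p) (u : ℝ) (hu : 0 < u) (hus₀ : u < s₀) :
    ∃ C : ℝ, ∀ M : ℝ, 0 < M → ∀ h : ℝ, 0 < h → h ≤ 1 →
      ∫ x in {x : ℝ | M < |x|},
          |x| ^ p * ((∫ y, gaussDens h (x - y) ∂G) +
            ∫ y, gaussDens h (x - y) ∂G') ≤
        C * Real.exp (-u * M) := by
  set s : ℝ := (u + s₀) / 2 with hs_def
  have hs0 : 0 < s := by positivity
  have hsu : u < s := by simp only [hs_def]; linarith
  have hss : s < s₀ := by simp only [hs_def]; linarith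
  have hs1 : s ≤ 1 := by linarith
  have habs_s : |s| < s₀ := by rw [abs_of_pos hs0]; exact hss
  have habs_ns : |(-s)| < s₀ := by rw [abs_neg, abs_of_pos hs0]; exact hss
  set ε : ℝ := s - u with hε_def
  have hε0 : 0 < ε := by simp only [hε_def]; linarith
  set K : ℝ := 1 + ((⌈p⌉₊ : ℝ) / ε) ^ ⌈p⌉₊ with hK_def
  have hK0 : 0 < K := by positivity
  have hAint : Integrable (fun y => Real.exp (s * y) + Real.exp (-(s * y))) G := by
    have h1 := hmgfG s habs_s
    have h2 := hmgfG (-s) habs_ns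
    simpa [neg_mul, Pi.add_def] using h1.add h2
  have hA'int : Integrable (fun y => Real.exp (s * y) + Real.exp (-(s * y))) G' := by
    have h1 := hmgfG' s habs_s
    have h2 := hmgfG' (-s) habs_ns
    simpa [neg_mul, Pi.add_def] using h1.add h2
  set A : ℝ := ∫ y, (Real.exp (s * y) + Real.exp (-(s * y))) ∂G with hA_def
  set A' : ℝ := ∫ y, (Real.exp (s * y) + Real.exp (-(s * y))) ∂G' with hA'_def
  have hA0 : 0 ≤ A := integral_nonneg fun y => by positivity
  have hA'0 : 0 ≤ A' := integral_nonneg fun y => by positivity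
  refine ⟨K * (2 * Real.exp 1) * (A + A'), ?_⟩
  intro M hM h hh hh1
  have hC0 : 0 ≤ K * (2 * Real.exp 1) * (A + A') := by positivity
  -- notation
  have hInn : ∀ x : ℝ, 0 ≤ ∫ y, gaussDens h (x - y) ∂G :=
    fun x => integral_nonneg fun y => gaussDens_nonneg hh _
  have hI'nn : ∀ x : ℝ, 0 ≤ ∫ y, gaussDens h (x - y) ∂G' :=
    fun x => integral_nonneg fun y => gaussDens_nonneg hh _
  have hImeas : StronglyMeasurable fun x => ∫ y, gaussDens h (x - y) ∂G :=
    (((gaussDens_cont h).comp (continuous_fst.sub continuous_snd)).stronglyMeasurable).integral_prod_right'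
  have hI'meas : StronglyMeasurable fun x => ∫ y, gaussDens h (x - y) ∂G' :=
    (((gaussDens_cont h).comp (continuous_fst.sub continuous_snd)).stronglyMeasurable).integral_prod_right'
  have habs_meas : Measurable fun x : ℝ => |x| ^ p := by fun_prop
  have hexp_meas : Measurable fun x : ℝ => Real.exp (s * |x|) := by fun_prop
  have hfmeas : AEStronglyMeasurable
      (fun x => |x| ^ p * ((∫ y, gaussDens h (x - y) ∂G) + ∫ y, gaussDens h (x - y) ∂G'))
      (volume.restrict {x : ℝ | M < |x|}) :=
    ((habs_meas.stronglyMeasurable.mul (hImeas.add hI'meas))).aestronglyMeasurable.restrict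
  rw [integral_eq_lintegral_of_nonneg_ae
    (ae_of_all _ fun x => mul_nonneg (Real.rpow_nonneg (abs_nonneg x) p)
      (add_nonneg (hInn x) (hI'nn x))) hfmeas]
  apply ENNReal.toReal_le_of_le_ofReal (mul_nonneg hC0 (Real.exp_nonneg _))
  -- integrability of gaussDens slices
  have hGint : ∀ (μ : Measure ℝ) [IsProbabilityMeasure μ], ∀ x : ℝ,
      Integrable (fun y => gaussDens h (x - y)) μ := by
    intro μ _ x
    refine Integrable.mono' (integrable_const ((h * Real.sqrt (2 * π))⁻¹)) ?_ ?_
    · exact ((gaussDens_cont h).comp (continuous_const.sub continuous_id)).aestronglyMeasurable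
    · refine ae_of_all _ fun y => ?_
      rw [Real.norm_eq_abs, abs_of_nonneg (gaussDens_nonneg hh _)]
      exact gaussDens_le hh _
  -- key pointwise bound on the set
  have key : ∀ x ∈ {x : ℝ | M < |x|},
      |x| ^ p * ((∫ y, gaussDens h (x - y) ∂G) + ∫ y, gaussDens h (x - y) ∂G')
        ≤ (K * Real.exp (-u * M)) * (Real.exp (s * |x|)
          * ((∫ y, gaussDens h (x - y) ∂G) + ∫ y, gaussDens h (x - y) ∂G')) := by
    intro x hx
    have hxM : M ≤ |x| := le_of_lt hx
    have hF : 0 ≤ (∫ y, gaussDens h (x - y) ∂G) + ∫ y, gaussDens h (x - y) ∂G' :=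
      add_nonneg (hInn x) (hI'nn x)
    have h1 : |x| ^ p ≤ K * Real.exp (ε * |x|) :=
      rpow_le_const_mul_exp hp hε0 (abs_nonneg x)
    have h2 : Real.exp (ε * |x|) ≤ Real.exp (-u * M) * Real.exp (s * |x|) := by
      rw [← Real.exp_add]
      apply Real.exp_le_exp.mpr
      simp only [hε_def]
      nlinarith
    calc |x| ^ p * ((∫ y, gaussDens h (x - y) ∂G) + ∫ y, gaussDens h (x - y) ∂G')
        ≤ (K * Real.exp (ε * |x|))
          * ((∫ y, gaussDens h (x - y) ∂G) + ∫ y, gaussDens h (x - y) ∂G') :=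
          mul_le_mul_of_nonneg_right h1 hF
      _ ≤ (K * (Real.exp (-u * M) * Real.exp (s * |x|)))
          * ((∫ y, gaussDens h (x - y) ∂G) + ∫ y, gaussDens h (x - y) ∂G') :=
          mul_le_mul_of_nonneg_right (mul_le_mul_of_nonneg_left h2 hK0.le) hF
      _ = (K * Real.exp (-u * M)) * (Real.exp (s * |x|)
          * ((∫ y, gaussDens h (x - y) ∂G) + ∫ y, gaussDens h (x - y) ∂G')) := by ring
  -- measurable bound function
  have hg_meas : Measurable fun x : ℝ => ENNReal.ofReal (K * Real.exp (-u * M))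
      * ENNReal.ofReal (Real.exp (s * |x|)
        * ((∫ y, gaussDens h (x - y) ∂G) + ∫ y, gaussDens h (x - y) ∂G')) :=
    measurable_const.mul
      ((hexp_meas.mul (hImeas.measurable.add hI'meas.measurable)).ennreal_ofReal)
  -- main estimate for the full-space lintegral
  have hbound : ∫⁻ x, ENNReal.ofReal (Real.exp (s * |x|)
        * ((∫ y, gaussDens h (x - y) ∂G) + ∫ y, gaussDens h (x - y) ∂G'))
      ≤ ENNReal.ofReal (2 * Real.exp 1) * (ENNReal.ofReal A + ENNReal.ofReal A') := by
    have hsplit : ∀ x : ℝ, ENNReal.ofReal (Real.exp (s * |x|)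
          * ((∫ y, gaussDens h (x - y) ∂G) + ∫ y, gaussDens h (x - y) ∂G'))
        = ENNReal.ofReal (Real.exp (s * |x|))
            * ∫⁻ y, ENNReal.ofReal (gaussDens h (x - y)) ∂G
          + ENNReal.ofReal (Real.exp (s * |x|))
            * ∫⁻ y, ENNReal.ofReal (gaussDens h (x - y)) ∂G' := by
      intro x
      rw [ENNReal.ofReal_mul (Real.exp_nonneg _), ENNReal.ofReal_add (hInn x) (hI'nn x),
        mul_add,
        ofReal_integral_eq_lintegral_ofReal (hGint G x)
          (ae_of_all _ fun y => gaussDens_nonneg hh _),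
        ofReal_integral_eq_lintegral_ofReal (hGint G' x)
          (ae_of_all _ fun y => gaussDens_nonneg hh _)]
    simp_rw [hsplit]
    have hmeas1 : Measurable fun x : ℝ => ENNReal.ofReal (Real.exp (s * |x|))
        * ∫⁻ y, ENNReal.ofReal (gaussDens h (x - y)) ∂G := by
      apply hexp_meas.ennreal_ofReal.mul
      apply Measurable.lintegral_prod_right'
        (f := fun z : ℝ × ℝ => ENNReal.ofReal (gaussDens h (z.1 - z.2)))
      exact ((gaussDens_cont h).comp (continuous_fst.sub continuous_snd)).measurable.ennreal_ofReal
    rw [lintegral_add_left hmeas1, mul_add]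
    exact add_le_add (single_measure_bound G hs0.le hs1 hh hh1 hAint)
      (single_measure_bound G' hs0.le hs1 hh hh1 hA'int)
  -- assemble
  calc ∫⁻ x in {x : ℝ | M < |x|}, ENNReal.ofReal (|x| ^ p
          * ((∫ y, gaussDens h (x - y) ∂G) + ∫ y, gaussDens h (x - y) ∂G'))
      ≤ ∫⁻ x in {x : ℝ | M < |x|}, ENNReal.ofReal (K * Real.exp (-u * M))
          * ENNReal.ofReal (Real.exp (s * |x|)
            * ((∫ y, gaussDens h (x - y) ∂G) + ∫ y, gaussDens h (x - y) ∂G')) := by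
        refine setLIntegral_mono hg_meas fun x hx => ?_
        rw [← ENNReal.ofReal_mul (mul_nonneg hK0.le (Real.exp_nonneg _))]
        exact ENNReal.ofReal_le_ofReal (key x hx)
    _ = ENNReal.ofReal (K * Real.exp (-u * M))
        * ∫⁻ x in {x : ℝ | M < |x|}, ENNReal.ofReal (Real.exp (s * |x|)
            * ((∫ y, gaussDens h (x - y) ∂G) + ∫ y, gaussDens h (x - y) ∂G')) :=
        lintegral_const_mul' _ _ ENNReal.ofReal_ne_top
    _ ≤ ENNReal.ofReal (K * Real.exp (-u * M))
        * ∫⁻ x, ENNReal.ofReal (Real.exp (s * |x|)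
            * ((∫ y, gaussDens h (x - y) ∂G) + ∫ y, gaussDens h (x - y) ∂G')) :=
        mul_le_mul_right (setLIntegral_le_lintegral _ _) _
    _ ≤ ENNReal.ofReal (K * Real.exp (-u * M))
        * (ENNReal.ofReal (2 * Real.exp 1) * (ENNReal.ofReal A + ENNReal.ofReal A')) :=
        mul_le_mul_right hbound _
    _ = ENNReal.ofReal (K * (2 * Real.exp 1) * (A + A') * Real.exp (-u * M)) := by
        rw [← ENNReal.ofReal_add hA0 hA'0,
          ← ENNReal.ofReal_mul (by positivity : (0:ℝ) ≤ 2 * Real.exp 1),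
          ← ENNReal.ofReal_mul (by positivity : (0:ℝ) ≤ K * Real.exp (-u * M))]
        congr 1
        ring
end
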